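/- Let G be a weighted graph, let F be a bipartite graph, and let 𝓗 be the class of all graphs that are weighted cross-bipartite swapping in G. Then every 𝓗-blow-up H of F satisfies hom(H, G)² ≤ hom(H × K_2, G). -/

import Mathlib

open SimpleGraph

/-- The tensor product `H × K₂`. -/
def tensorK2 {V : Type} (H : SimpleGraph V) : SimpleGraph (V × Fin 2) where
  Adj x y := H.Adj x.1 y.1 ∧ x.2 ≠ y.2
  symm := ⟨fun _ _ h => ⟨h.1.symm, h.2.symm⟩⟩
  loopless := ⟨fun _ h => h.2 rfl⟩

/-- The weight a symmetric matrix `G` puts on an unordered pair of indices. -/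
noncomputable def edgeWeight {n : ℕ} (G : Matrix (Fin n) (Fin n) ℝ) (hG : G.IsHermitian) :
    Sym2 (Fin n) → ℝ :=
  Sym2.lift ⟨fun i j => G i j, fun i j => by simpa using hG.apply j i⟩

-- The `G`-volume `V_H(x; G) = Σ_φ Π_{uv∈E(H)} G(φu,φv) Π_u x_{u,φ(u)}`.
open scoped Classical in
noncomputable def gvol {V : Type} [Fintype V] {n : ℕ} (H : SimpleGraph V)
    (G : Matrix (Fin n) (Fin n) ℝ) (hG : G.IsHermitian) (x : V → Fin n → ℝ) : ℝ :=
  ∑ φ : V → Fin n, (∏ e ∈ H.edgeFinset, edgeWeight G hG (e.map φ)) * ∏ v : V, x v (φ v)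

/-- A `t`-vertex graph `H` is weighted cross-bipartite swapping in the weighted graph `G`:
for all nonnegative `a, b : [n] → ℝ`,
`V_H(a,…,a;G) ⬝ V_H(b,…,b;G) ≤ V_{H×K₂}(a,…,a,b,…,b;G)`. -/
def WeightedCBS {V : Type} [Fintype V] {n : ℕ} (H : SimpleGraph V)
    (G : Matrix (Fin n) (Fin n) ℝ) (hG : G.IsHermitian) : Prop :=
  ∀ a b : Fin n → ℝ, (∀ ν, 0 ≤ a ν) → (∀ ν, 0 ≤ b ν) →
    gvol H G hG (fun _ => a) * gvol H G hG (fun _ => b) ≤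
      gvol (tensorK2 H) G hG (fun p => if p.2 = 0 then a else b)

/-- `H` is a blow-up of `F` by graphs of the class described by `P`. -/
def IsBlowUpOf {V ι : Type} (H : SimpleGraph V) (F : SimpleGraph ι)
    (P : (α : Type) → SimpleGraph α → Prop) : Prop :=
  ∃ p : V → ι, Function.Surjective p ∧
    (∀ u v : V, p u ≠ p v → (H.Adj u v ↔ F.Adj (p u) (p v))) ∧
    ∀ i : ι, P (p ⁻¹' {i}) (H.induce (p ⁻¹' {i}))

open Finset
open scoped Classical

namespace St13

/-- `r` if `P` holds, else `1`, with a fixed (classical) decision procedure. -/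
noncomputable def cond1 (P : Prop) (r : ℝ) : ℝ := @ite ℝ P (Classical.propDecidable P) r 1

lemma cond1_pos {P : Prop} (h : P) (r : ℝ) : cond1 P r = r := by
  unfold cond1
  exact @if_pos P (Classical.propDecidable P) h ℝ r 1

lemma cond1_neg {P : Prop} (h : ¬ P) (r : ℝ) : cond1 P r = 1 := by
  unfold cond1
  exact @if_neg P (Classical.propDecidable P) h ℝ r 1

lemma cond1_eq_ite (P : Prop) [Decidable P] (r : ℝ) : cond1 P r = if P then r else 1 := by
  by_cases h : P
  · rw [cond1_pos h, if_pos h]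
  · rw [cond1_neg h, if_neg h]

lemma cond1_congr {P Q : Prop} (h : P ↔ Q) (r : ℝ) : cond1 P r = cond1 Q r := by
  by_cases hp : P
  · rw [cond1_pos hp, cond1_pos (h.1 hp)]
  · rw [cond1_neg hp, cond1_neg (fun hq => hp (h.2 hq))]

lemma cond1_nonneg {P : Prop} {r : ℝ} (h : 0 ≤ r) : 0 ≤ cond1 P r := by
  by_cases hp : P
  · rwa [cond1_pos hp]
  · rw [cond1_neg hp]; norm_num

variable {n : ℕ} (G : Matrix (Fin n) (Fin n) ℝ)

noncomputable def OP {W : Type} [Fintype W] (A : W → W → Prop) (φ : W → Fin n) : ℝ :=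
  ∏ z : W × W, cond1 (A z.1 z.2) (G (φ z.1) (φ z.2))

noncomputable def LP {W : Type} [Fintype W] [LinearOrder W] (A : W → W → Prop) (φ : W → Fin n) : ℝ :=
  ∏ z : W × W, cond1 (z.1 < z.2 ∧ A z.1 z.2) (G (φ z.1) (φ z.2))

lemma op_nonneg (hnn : ∀ i j, 0 ≤ G i j) {W : Type} [Fintype W] (A : W → W → Prop)
    (φ : W → Fin n) : 0 ≤ OP G A φ :=
  Finset.prod_nonneg fun z _ => cond1_nonneg (hnn _ _)

lemma lp_nonneg (hnn : ∀ i j, 0 ≤ G i j) {W : Type} [Fintype W] [LinearOrder W]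
    (A : W → W → Prop) (φ : W → Fin n) : 0 ≤ LP G A φ :=
  Finset.prod_nonneg fun z _ => cond1_nonneg (hnn _ _)

lemma lp_congr {W : Type} [Fintype W] [LinearOrder W] {A B : W → W → Prop}
    (h : ∀ x y, A x y ↔ B x y) (φ : W → Fin n) : LP G A φ = LP G B φ :=
  Finset.prod_congr rfl fun z _ => cond1_congr (and_congr Iff.rfl (h _ _)) _

lemma lp_sq (hsy : ∀ i j, G i j = G j i) {W : Type} [Fintype W] [LinearOrder W]
    {A : W → W → Prop} (hA : ∀ x y, A x y → A y x) (hirr : ∀ x, ¬ A x x) (φ : W → Fin n) :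
    LP G A φ ^ 2 = OP G A φ := by
  unfold LP OP
  have h2 : (∏ z : W × W, cond1 (z.1 < z.2 ∧ A z.1 z.2) (G (φ z.1) (φ z.2)))
      = ∏ z : W × W, cond1 (z.2 < z.1 ∧ A z.1 z.2) (G (φ z.1) (φ z.2)) := by
    rw [← Fintype.prod_equiv (Equiv.prodComm W W) _
      (fun z : W × W => cond1 (z.1 < z.2 ∧ A z.1 z.2) (G (φ z.1) (φ z.2))) (fun z => rfl)]
    apply Finset.prod_congr rfl
    intro z _
    simp only [Equiv.prodComm_apply, Prod.fst_swap, Prod.snd_swap]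
    by_cases hlt : z.2 < z.1 <;> by_cases ha : A z.1 z.2
    · rw [cond1_pos ⟨hlt, hA _ _ ha⟩, cond1_pos ⟨hlt, ha⟩, hsy]
    · rw [cond1_neg (fun h => ha (hA _ _ h.2)), cond1_neg (fun h => ha h.2)]
    · rw [cond1_neg (fun h => hlt h.1), cond1_neg (fun h => hlt h.1)]
    · rw [cond1_neg (fun h => hlt h.1), cond1_neg (fun h => hlt h.1)]
  rw [sq]
  nth_rewrite 2 [h2]
  rw [← Finset.prod_mul_distrib]
  apply Finset.prod_congr rfl
  intro z _
  rcases lt_trichotomy z.1 z.2 with h | h | h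
  · rw [cond1_neg (show ¬(z.2 < z.1 ∧ A z.1 z.2) from fun hh => absurd hh.1 (asymm h)), mul_one]
    by_cases ha : A z.1 z.2
    · rw [cond1_pos (show z.1 < z.2 ∧ A z.1 z.2 from ⟨h, ha⟩), cond1_pos ha]
    · rw [cond1_neg (show ¬(z.1 < z.2 ∧ A z.1 z.2) from fun hh => ha hh.2), cond1_neg ha]
  · have ha : ¬ A z.1 z.2 := h ▸ hirr z.1
    rw [cond1_neg (show ¬(z.2 < z.1 ∧ A z.1 z.2) from fun hh => ha hh.2),
      cond1_neg (show ¬(z.1 < z.2 ∧ A z.1 z.2) from fun hh => ha hh.2), cond1_neg ha, one_mul]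
  · rw [cond1_neg (show ¬(z.1 < z.2 ∧ A z.1 z.2) from fun hh => absurd hh.1 (asymm h)), one_mul]
    by_cases ha : A z.1 z.2
    · rw [cond1_pos (show z.2 < z.1 ∧ A z.1 z.2 from ⟨h, ha⟩), cond1_pos ha]
    · rw [cond1_neg (show ¬(z.2 < z.1 ∧ A z.1 z.2) from fun hh => ha hh.2), cond1_neg ha]

lemma sq_cancel {a b : ℝ} (ha : 0 ≤ a) (hb : 0 ≤ b) (h : a ^ 2 = b ^ 2) : a = b := by
  nlinarith [sq_nonneg (a - b), sq_nonneg (a + b)]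

lemma lp_split {W : Type} [Fintype W] [LinearOrder W] {A B : W → W → Prop}
    (hdisj : ∀ x y, ¬ (A x y ∧ B x y)) (φ : W → Fin n) :
    LP G (fun x y => A x y ∨ B x y) φ = LP G A φ * LP G B φ := by
  unfold LP
  rw [← Finset.prod_mul_distrib]
  apply Finset.prod_congr rfl
  intro z _
  by_cases hlt : z.1 < z.2
  · by_cases ha : A z.1 z.2 <;> by_cases hb : B z.1 z.2
    · exact absurd ⟨ha, hb⟩ (hdisj _ _)
    · rw [cond1_pos (show z.1 < z.2 ∧ (A z.1 z.2 ∨ B z.1 z.2) from ⟨hlt, Or.inl ha⟩),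
        cond1_pos (show z.1 < z.2 ∧ A z.1 z.2 from ⟨hlt, ha⟩),
        cond1_neg (show ¬(z.1 < z.2 ∧ B z.1 z.2) from fun h => hb h.2), mul_one]
    · rw [cond1_pos (show z.1 < z.2 ∧ (A z.1 z.2 ∨ B z.1 z.2) from ⟨hlt, Or.inr hb⟩),
        cond1_neg (show ¬(z.1 < z.2 ∧ A z.1 z.2) from fun h => ha h.2),
        cond1_pos (show z.1 < z.2 ∧ B z.1 z.2 from ⟨hlt, hb⟩), one_mul]
    · rw [cond1_neg (show ¬(z.1 < z.2 ∧ (A z.1 z.2 ∨ B z.1 z.2)) from ?_),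
        cond1_neg (show ¬(z.1 < z.2 ∧ A z.1 z.2) from fun h => ha h.2),
        cond1_neg (show ¬(z.1 < z.2 ∧ B z.1 z.2) from fun h => hb h.2), mul_one]
      rintro ⟨-, h | h⟩
      exacts [ha h, hb h]
  · rw [cond1_neg (show ¬(z.1 < z.2 ∧ (A z.1 z.2 ∨ B z.1 z.2)) from fun h => hlt h.1),
      cond1_neg (show ¬(z.1 < z.2 ∧ A z.1 z.2) from fun h => hlt h.1),
      cond1_neg (show ¬(z.1 < z.2 ∧ B z.1 z.2) from fun h => hlt h.1), mul_one]

lemma lp_eq_of_agree {W : Type} [Fintype W] [LinearOrder W] {A : W → W → Prop}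
    {φ φ' : W → Fin n} (h : ∀ x y, A x y → φ x = φ' x ∧ φ y = φ' y) :
    LP G A φ = LP G A φ' := by
  unfold LP
  apply Finset.prod_congr rfl
  intro z _
  by_cases hz : z.1 < z.2 ∧ A z.1 z.2
  · rw [cond1_pos hz, cond1_pos hz, (h _ _ hz.2).1, (h _ _ hz.2).2]
  · rw [cond1_neg hz, cond1_neg hz]

lemma ew_eq_lp {W : Type} [Fintype W] [LinearOrder W] (hG : G.IsHermitian) (H : SimpleGraph W)
    [Fintype H.edgeSet] (φ : W → Fin n) :
    (∏ e ∈ H.edgeFinset, edgeWeight G hG (e.map φ)) = LP G H.Adj φ := by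
  classical
  have hew : ∀ a b : Fin n, edgeWeight G hG s(a, b) = G a b := fun a b => by
    simp [edgeWeight]
  have h0 : LP G H.Adj φ
      = ∏ z ∈ univ.filter (fun z : W × W => z.1 < z.2 ∧ H.Adj z.1 z.2), G (φ z.1) (φ z.2) := by
    rw [Finset.prod_filter]
    exact Finset.prod_congr rfl fun z _ => cond1_eq_ite _ _
  rw [h0]
  refine (Finset.prod_nbij (fun z : W × W => s(z.1, z.2)) ?_ ?_ ?_ ?_).symm
  · intro z hz
    simp only [Finset.mem_filter] at hz
    rw [mem_edgeFinset, mem_edgeSet]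
    exact hz.2.2
  · intro z hz z' hz' hzz
    simp only [Finset.coe_filter, Set.mem_setOf_eq] at hz hz'
    rw [Sym2.eq_iff] at hzz
    rcases hzz with ⟨h1, h2⟩ | ⟨h1, h2⟩
    · exact Prod.ext h1 h2
    · exact absurd (h1 ▸ h2 ▸ hz.2.1) (asymm hz'.2.1)
  · intro e he
    simp only [Finset.coe_filter, Set.mem_setOf_eq, coe_edgeFinset] at he ⊢
    induction e with
    | _ a b =>
      have hab : H.Adj a b := he
      rcases lt_or_gt_of_ne hab.ne with h | h
      · exact ⟨(a, b), ⟨mem_univ _, h, hab⟩, rfl⟩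
      · exact ⟨(b, a), ⟨mem_univ _, h, hab.symm⟩, Sym2.eq_swap⟩
  · intro z hz
    rw [Sym2.map_pair_eq, hew]

lemma gvol_eq {W : Type} [Fintype W] [LinearOrder W] (hG : G.IsHermitian) (H : SimpleGraph W)
    (x : W → Fin n → ℝ) :
    gvol H G hG x = ∑ φ : W → Fin n, LP G H.Adj φ * ∏ v : W, x v (φ v) := by
  unfold gvol
  refine Finset.sum_congr ?_ fun φ _ => ?_
  · congr 1
    exact Subsingleton.elim _ _
  · rw [ew_eq_lp G hG]

lemma op_restrict {α β : Type} [Fintype α] [Fintype β] (j : β → α) (hj : Function.Injective j)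
    {A : α → α → Prop} (hA : ∀ x y, A x y → (∃ b, j b = x) ∧ (∃ b, j b = y)) (φ : α → Fin n) :
    OP G A φ = OP G (fun x y => A (j x) (j y)) (φ ∘ j) := by
  classical
  unfold OP
  have hjj : ∀ x ∈ (univ : Finset (β × β)), ∀ y ∈ univ, Prod.map j j x = Prod.map j j y → x = y :=
    fun x _ y _ h => hj.prodMap hj h
  have h1 : (∏ z : β × β, cond1 (A (j z.1) (j z.2)) (G ((φ ∘ j) z.1) ((φ ∘ j) z.2)))
      = ∏ z ∈ (univ : Finset (β × β)).image (Prod.map j j),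
          cond1 (A z.1 z.2) (G (φ z.1) (φ z.2)) := by
    rw [Finset.prod_image hjj]
    exact Finset.prod_congr rfl fun z _ => rfl
  rw [h1]
  refine (Finset.prod_subset (Finset.subset_univ _) ?_).symm
  intro z _ hz
  by_cases h : A z.1 z.2
  · obtain ⟨⟨b1, hb1⟩, ⟨b2, hb2⟩⟩ := hA _ _ h
    exact absurd (Finset.mem_image.2 ⟨(b1, b2), mem_univ _, by simp [Prod.map, hb1, hb2]⟩) hz
  · exact cond1_neg h _

lemma lp_restrict {α β : Type} [Fintype α] [Fintype β] [LinearOrder α] [LinearOrder β]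
    (hnn : ∀ i j, 0 ≤ G i j) (hsy : ∀ i j, G i j = G j i)
    (j : β → α) (hj : Function.Injective j) {A : α → α → Prop}
    (hsymA : ∀ x y, A x y → A y x) (hirr : ∀ x, ¬ A x x)
    (hA : ∀ x y, A x y → (∃ b, j b = x) ∧ (∃ b, j b = y)) (φ : α → Fin n) :
    LP G A φ = LP G (fun x y => A (j x) (j y)) (φ ∘ j) := by
  apply sq_cancel (lp_nonneg G hnn _ _) (lp_nonneg G hnn _ _)
  rw [lp_sq G hsy hsymA hirr, lp_sq G hsy (fun x y h => hsymA _ _ h) (fun x h => hirr _ h),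
    op_restrict G j hj hA]

lemma sum_double {W : Type} [Fintype W] (f g : (W → Fin n) → ℝ) :
    ∑ ψ : W × Fin 2 → Fin n, f (fun w => ψ (w, 0)) * g (fun w => ψ (w, 1))
      = (∑ φ : W → Fin n, f φ) * ∑ φ : W → Fin n, g φ := by
  have step1 : (∑ ψ : W × Fin 2 → Fin n, f (fun w => ψ (w, 0)) * g (fun w => ψ (w, 1)))
      = ∑ q : (W → Fin n) × (W → Fin n), f q.1 * g q.2 :=
    Fintype.sum_equiv ((Equiv.curry W (Fin 2) (Fin n)).trans
      ((Equiv.arrowCongr (Equiv.refl W) (finTwoArrowEquiv (Fin n))).trans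
        (Equiv.arrowProdEquivProdArrow W (fun _ => Fin n) (fun _ => Fin n)))) _ _ (fun ψ => rfl)
  rw [step1, Finset.sum_mul_sum]
  exact Fintype.sum_prod_type (f := fun q : (W → Fin n) × (W → Fin n) => f q.1 * g q.2)

lemma prod_fin22 (F : Fin 2 × Fin 2 → ℝ) :
    ∏ q : Fin 2 × Fin 2, F q = F (0, 0) * F (0, 1) * (F (1, 0) * F (1, 1)) := by
  rw [Fintype.prod_prod_type, Fin.prod_univ_two]
  rw [Fin.prod_univ_two, Fin.prod_univ_two]

lemma op_double {W : Type} [Fintype W] {K : W → W → Prop} (ψ : W × Fin 2 → Fin n) :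
    OP G (fun x y : W × Fin 2 => K x.1 y.1 ∧ x.2 = y.2) ψ
      = OP G K (fun w => ψ (w, 0)) * OP G K (fun w => ψ (w, 1)) := by
  unfold OP
  have step1 : (∏ z : (W × Fin 2) × (W × Fin 2),
        cond1 (K z.1.1 z.2.1 ∧ z.1.2 = z.2.2) (G (ψ z.1) (ψ z.2)))
      = ∏ y : (W × W) × Fin 2 × Fin 2, cond1 (K y.1.1 y.1.2 ∧ y.2.1 = y.2.2)
          (G (ψ (y.1.1, y.2.1)) (ψ (y.1.2, y.2.2))) :=
    Fintype.prod_equiv (Equiv.prodProdProdComm W (Fin 2) W (Fin 2)) _ _ (fun z => rfl)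
  rw [step1, Fintype.prod_prod_type, ← Finset.prod_mul_distrib]
  refine Finset.prod_congr rfl fun a _ => ?_
  rw [prod_fin22 (fun q => cond1 (K a.1 a.2 ∧ q.1 = q.2) (G (ψ (a.1, q.1)) (ψ (a.2, q.2))))]
  have h01 : ¬((0 : Fin 2) = 1) := by decide
  have h10 : ¬((1 : Fin 2) = 0) := by decide
  by_cases hK : K a.1 a.2
  · rw [cond1_pos (show K a.1 a.2 ∧ (0 : Fin 2) = 0 from ⟨hK, rfl⟩),
      cond1_pos (show K a.1 a.2 ∧ (1 : Fin 2) = 1 from ⟨hK, rfl⟩),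
      cond1_neg (fun h => h01 h.2), cond1_neg (fun h => h10 h.2),
      cond1_pos hK, cond1_pos hK]
    ring
  · rw [cond1_neg (show ¬(K a.1 a.2 ∧ (0 : Fin 2) = 0) from fun h => hK h.1),
      cond1_neg (show ¬(K a.1 a.2 ∧ (0 : Fin 2) = 1) from fun h => hK h.1),
      cond1_neg (show ¬(K a.1 a.2 ∧ (1 : Fin 2) = 0) from fun h => hK h.1),
      cond1_neg (show ¬(K a.1 a.2 ∧ (1 : Fin 2) = 1) from fun h => hK h.1),
      cond1_neg hK, cond1_neg hK]
    ring

lemma lp_double {W : Type} [Fintype W] [LinearOrder W] [LinearOrder (W × Fin 2)]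
    (hnn : ∀ i j, 0 ≤ G i j) (hsy : ∀ i j, G i j = G j i)
    {K : W → W → Prop} (hsymK : ∀ x y, K x y → K y x) (hirr : ∀ x, ¬ K x x)
    (ψ : W × Fin 2 → Fin n) :
    LP G (fun x y : W × Fin 2 => K x.1 y.1 ∧ x.2 = y.2) ψ
      = LP G K (fun w => ψ (w, 0)) * LP G K (fun w => ψ (w, 1)) := by
  apply sq_cancel (lp_nonneg G hnn _ _)
    (mul_nonneg (lp_nonneg G hnn _ _) (lp_nonneg G hnn _ _))
  rw [mul_pow, lp_sq G hsy (fun x y h => ⟨hsymK _ _ h.1, h.2.symm⟩) (fun x h => hirr _ h.1),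
    lp_sq G hsy hsymK hirr, lp_sq G hsy hsymK hirr, op_double]


lemma op_split {W : Type} [Fintype W] {A B : W → W → Prop}
    (hdisj : ∀ x y, ¬ (A x y ∧ B x y)) (φ : W → Fin n) :
    OP G (fun x y => A x y ∨ B x y) φ = OP G A φ * OP G B φ := by
  unfold OP
  rw [← Finset.prod_mul_distrib]
  apply Finset.prod_congr rfl
  intro z _
  by_cases ha : A z.1 z.2 <;> by_cases hb : B z.1 z.2
  · exact absurd ⟨ha, hb⟩ (hdisj _ _)
  · rw [cond1_pos (Or.inl ha : A z.1 z.2 ∨ B z.1 z.2), cond1_pos ha, cond1_neg hb, mul_one]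
  · rw [cond1_pos (Or.inr hb : A z.1 z.2 ∨ B z.1 z.2), cond1_neg ha, cond1_pos hb, one_mul]
  · rw [cond1_neg (show ¬(A z.1 z.2 ∨ B z.1 z.2) from fun h => h.elim ha hb),
      cond1_neg ha, cond1_neg hb, mul_one]

lemma op_swap (hsy : ∀ i j, G i j = G j i) {W : Type} [Fintype W] {A B : W → W → Prop}
    (hAB : ∀ x y, A x y ↔ B y x) (φ : W → Fin n) : OP G A φ = OP G B φ := by
  unfold OP
  refine Fintype.prod_equiv (Equiv.prodComm W W) _ _ fun z => ?_
  simp only [Equiv.prodComm_apply, Prod.fst_swap, Prod.snd_swap]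
  by_cases ha : A z.1 z.2
  · rw [cond1_pos ha, cond1_pos ((hAB _ _).1 ha), hsy]
  · rw [cond1_neg ha, cond1_neg (fun h => ha ((hAB _ _).2 h))]

lemma prod_guard_restrict {α β : Type} [Fintype α] [Fintype β] (j : β → α)
    (hj : Function.Injective j) {P : α → Prop} (hP : ∀ x, P x → ∃ b, j b = x) (f : α → ℝ) :
    ∏ x : α, cond1 (P x) (f x) = ∏ b : β, cond1 (P (j b)) (f (j b)) := by
  classical
  have hjj : ∀ x ∈ (univ : Finset β), ∀ y ∈ univ, j x = j y → x = y := fun x _ y _ h => hj h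
  rw [show (∏ b : β, cond1 (P (j b)) (f (j b)))
      = ∏ x ∈ (univ : Finset β).image j, cond1 (P x) (f x) from (Finset.prod_image (f := fun x => cond1 (P x) (f x)) hjj).symm]
  refine (Finset.prod_subset (Finset.subset_univ _) fun x _ hx => ?_).symm
  by_cases h : P x
  · obtain ⟨b, hb⟩ := hP _ h
    exact absurd (Finset.mem_image.2 ⟨b, mem_univ _, hb⟩) hx
  · exact cond1_neg h _

lemma op_congr {W : Type} [Fintype W] {A B : W → W → Prop}
    (h : ∀ x y, A x y ↔ B x y) (φ : W → Fin n) : OP G A φ = OP G B φ :=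
  Finset.prod_congr rfl fun z _ => cond1_congr (h _ _) _

lemma sum_univ_inst {α : Type} {F1 F2 : Fintype α} (f : α → ℝ) :
    @Finset.sum α ℝ _ (@Finset.univ α F1) f = @Finset.sum α ℝ _ (@Finset.univ α F2) f := by
  rw [Subsingleton.elim F1 F2]

lemma sum_congr_univ {α : Type} {F1 F2 : Fintype α} {f g : α → ℝ} (h : ∀ x, f x = g x) :
    @Finset.sum α ℝ _ (@Finset.univ α F1) f = @Finset.sum α ℝ _ (@Finset.univ α F2) g := by
  rw [Subsingleton.elim F1 F2]
  exact Finset.sum_congr rfl fun x _ => h x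

/-- An arbitrary linear order on a finite type. -/
noncomputable def arbLO (α : Type) [Fintype α] : LinearOrder α := by
  classical exact LinearOrder.lift' (Fintype.equivFin α) (Fintype.equivFin α).injective

end St13

open St13 in
set_option maxHeartbeats 4000000 in
/-- Let `G` be a weighted graph (symmetric with nonnegative entries).
If `H` is a blow-up of a bipartite graph `F` all of whose parts are weighted
cross-bipartite swapping in `G`, then `hom(H,G)² ≤ hom(H × K₂, G)`
(where `hom(H,G) = V_H(1,…,1;G)`). -/
theorem stmt13 {V ι : Type} [Fintype V] {n : ℕ} (H : SimpleGraph V) (F : SimpleGraph ι)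
    (hF : F.Colorable 2)
    (G : Matrix (Fin n) (Fin n) ℝ) (hG : G.IsHermitian) (hnn : ∀ i j, 0 ≤ G i j)
    (hblow : IsBlowUpOf H F fun α K => ∀ _ : Fintype α, WeightedCBS K G hG) :
    gvol H G hG (fun _ _ => 1) ^ 2 ≤ gvol (tensorK2 H) G hG (fun _ _ => 1) := by
  classical
  obtain ⟨p, hp, hpadj, hpcbs⟩ := hblow
  obtain ⟨C⟩ := hF
  letI : Fintype ι := Fintype.ofSurjective p hp
  letI : LinearOrder V := arbLO V
  letI : LinearOrder (V × Fin 2) := arbLO _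
  have hsy : ∀ i j : Fin n, G i j = G j i := fun i j => by simpa using hG.apply j i
  set Ks : Finset ι → (V × Fin 2) → (V × Fin 2) → Prop :=
    fun s x y => H.Adj x.1 y.1 ∧ ((p x.1 = p y.1 ∧ p x.1 ∈ s) ↔ x.2 ≠ y.2) with hKsdef
  have hKsym : ∀ s x y, Ks s x y → Ks s y x := by
    rintro s x y ⟨h1, h2⟩
    refine ⟨h1.symm, ?_⟩
    constructor
    · rintro ⟨ha, hb⟩
      exact fun he => ((h2.1 ⟨ha.symm, ha ▸ hb⟩) he.symm)
    · intro hne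
      obtain ⟨ha, hb⟩ := h2.2 (fun he => hne he.symm)
      exact ⟨ha.symm, ha ▸ hb⟩
  have hKirr : ∀ s x, ¬ Ks s x x := fun s x h => H.loopless.irrefl _ h.1
  set Wt : Finset ι → ℝ := fun s => ∑ ψ : V × Fin 2 → Fin n, LP G (Ks s) ψ with hWtdef
  have hWempty : gvol H G hG (fun _ _ => 1) ^ 2 = Wt ∅ := by
    have h1 : gvol H G hG (fun _ _ => 1) = ∑ φ : V → Fin n, LP G H.Adj φ := by
      rw [gvol_eq]
      exact sum_congr_univ fun φ => by rw [Finset.prod_const_one, mul_one]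
    have h2 : ∀ ψ : V × Fin 2 → Fin n, LP G (Ks ∅) ψ
        = LP G H.Adj (fun w => ψ (w, 0)) * LP G H.Adj (fun w => ψ (w, 1)) := by
      intro ψ
      rw [lp_congr G (B := fun x y : V × Fin 2 => H.Adj x.1 y.1 ∧ x.2 = y.2)
        (fun x y => ?_) ψ, lp_double G hnn hsy (fun a b h => h.symm) (fun a => H.loopless.irrefl a) ψ]
      constructor
      · rintro ⟨h1, h2⟩
        refine ⟨h1, not_not.1 fun hne => ?_⟩
        exact Finset.notMem_empty _ (h2.2 hne).2
      · rintro ⟨h1, h2⟩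
        exact ⟨h1, iff_of_false (fun hh => Finset.notMem_empty _ hh.2) (not_not.2 h2)⟩
    have h3 : Wt ∅ = ∑ ψ : V × Fin 2 → Fin n,
        LP G H.Adj (fun w => ψ (w, 0)) * LP G H.Adj (fun w => ψ (w, 1)) :=
      Finset.sum_congr rfl fun ψ _ => h2 ψ
    rw [h3, h1, sq]
    exact ((sum_congr_univ (fun _ => rfl)).trans ((sum_double (f := LP G H.Adj)
      (g := LP G H.Adj)).trans (congrArg₂ (· * ·) (sum_congr_univ fun _ => rfl)
        (sum_congr_univ fun _ => rfl)))).symm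
  have hWuniv : Wt Finset.univ = gvol (tensorK2 H) G hG (fun _ _ => 1) := by
    have hfin2 : ∀ a b u v : Fin 2, u ≠ v → ((a + u ≠ b + v) ↔ a = b) := by decide
    have hfin2' : ∀ a b u : Fin 2, (a + u ≠ b + u) ↔ ¬ a = b := by decide
    have haddinv : ∀ a b : Fin 2, a + b + b = a := by decide
    set σ : V × Fin 2 ≃ V × Fin 2 :=
      ⟨fun x => (x.1, x.2 + C (p x.1)), fun x => (x.1, x.2 + C (p x.1)),
        fun x => Prod.ext rfl (haddinv _ _), fun x => Prod.ext rfl (haddinv _ _)⟩ with hσ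
    have hconv : ∀ φ : V × Fin 2 → Fin n,
        LP G (tensorK2 H).Adj φ = LP G (Ks Finset.univ) (φ ∘ ⇑σ) := by
      intro φ
      rw [lp_restrict G hnn hsy ⇑σ σ.injective (A := (tensorK2 H).Adj) (fun x y h => (tensorK2 H).symm.symm _ _ h)
        (fun x => (tensorK2 H).loopless.irrefl x)
        (fun x y _ => ⟨⟨σ.symm x, σ.apply_symm_apply _⟩, ⟨σ.symm y, σ.apply_symm_apply _⟩⟩) φ]
      refine lp_congr G (fun x y => ?_) _
      show (H.Adj x.1 y.1 ∧ x.2 + C (p x.1) ≠ y.2 + C (p y.1)) ↔ _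
      constructor
      · rintro ⟨hadj, hne⟩
        refine ⟨hadj, ?_⟩
        by_cases hpe : p x.1 = p y.1
        · have hne' : x.2 + C (p y.1) ≠ y.2 + C (p y.1) := by rwa [hpe] at hne
          exact iff_of_true ⟨hpe, Finset.mem_univ _⟩ ((hfin2' _ _ _).1 hne')
        · have hF : F.Adj (p x.1) (p y.1) := (hpadj _ _ hpe).1 hadj
          have hx2 : x.2 = y.2 := (hfin2 _ _ _ _ (C.valid hF)).1 hne
          exact iff_of_false (fun hh => hpe hh.1) (not_not.2 hx2)
      · rintro ⟨hadj, hiff⟩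
        refine ⟨hadj, ?_⟩
        by_cases hpe : p x.1 = p y.1
        · have hx2 : x.2 ≠ y.2 := hiff.1 ⟨hpe, Finset.mem_univ _⟩
          rw [hpe]
          exact (hfin2' _ _ _).2 hx2
        · have hF : F.Adj (p x.1) (p y.1) := (hpadj _ _ hpe).1 hadj
          have hx2 : x.2 = y.2 := not_not.1 (fun hne => hpe (hiff.2 hne).1)
          exact (hfin2 _ _ _ _ (C.valid hF)).2 hx2
    have hreindex : (∑ φ : V × Fin 2 → Fin n, LP G (Ks Finset.univ) (φ ∘ ⇑σ))
        = ∑ φ : V × Fin 2 → Fin n, LP G (Ks Finset.univ) φ := by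
      refine Fintype.sum_bijective (fun φ : V × Fin 2 → Fin n => φ ∘ ⇑σ) ⟨?_, ?_⟩ _ _
        (fun φ => rfl)
      · intro a b hab
        funext z
        have := congrFun hab (σ.symm z)
        simpa only [Function.comp_apply, Equiv.apply_symm_apply] using this
      · intro ψ
        exact ⟨ψ ∘ ⇑σ.symm, funext fun z => by
          simp only [Function.comp_apply, Equiv.symm_apply_apply]⟩
    have h4 : gvol (tensorK2 H) G hG (fun _ _ => 1)
        = ∑ φ : V × Fin 2 → Fin n, LP G (tensorK2 H).Adj φ := by
      rw [gvol_eq]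
      exact sum_congr_univ fun φ => by rw [Finset.prod_const_one, mul_one]
    have h5 : (∑ φ : V × Fin 2 → Fin n, LP G (tensorK2 H).Adj φ)
        = ∑ φ : V × Fin 2 → Fin n, LP G (Ks Finset.univ) (φ ∘ ⇑σ) :=
      Finset.sum_congr rfl fun φ _ => hconv φ
    rw [h4, h5, hreindex]
  have hmono : ∀ s : Finset ι, ∀ i : ι, i ∉ s → Wt s ≤ Wt (insert i s) := by
    intro s i his
    set S : Set V := p ⁻¹' {i} with hSdef
    letI : LinearOrder ↥S := arbLO _
    letI : LinearOrder (↥S × Fin 2) := arbLO _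
    letI : LinearOrder (↥(Sᶜ) × Fin 2) := arbLO _
    set eSum : ↥S ⊕ ↥(Sᶜ) ≃ V := Equiv.Set.sumCompl S with heSum
    set Efin : V × Fin 2 ≃ (↥S × Fin 2) ⊕ (↥(Sᶜ) × Fin 2) :=
      (Equiv.prodCongr eSum.symm (Equiv.refl (Fin 2))).trans
        (Equiv.sumProdDistrib _ _ _) with hEfin
    set glue : (↥S × Fin 2 → Fin n) → (↥(Sᶜ) × Fin 2 → Fin n) → (V × Fin 2 → Fin n) :=
      fun ψT ψR z => Sum.elim ψT ψR (Efin z) with hglue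
    set embT : ↥S × Fin 2 → V × Fin 2 := fun a => (↑a.1, a.2) with hembT
    set embR : ↥(Sᶜ) × Fin 2 → V × Fin 2 := fun a => (↑a.1, a.2) with hembR
    have hmemT : ∀ a : ↥S, p (↑a : V) = i := fun a => a.2
    have hmemR : ∀ a : ↥(Sᶜ), ¬ p (↑a : V) = i := fun a => a.2
    have hembTinj : Function.Injective embT := by
      intro a b hab
      have h1 : (↑a.1 : V) = ↑b.1 := congrArg (fun z : V × Fin 2 => z.1) hab
      have h2 : a.2 = b.2 := congrArg (fun z : V × Fin 2 => z.2) hab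
      exact Prod.ext (Subtype.ext h1) h2
    have hembRinj : Function.Injective embR := by
      intro a b hab
      have h1 : (↑a.1 : V) = ↑b.1 := congrArg (fun z : V × Fin 2 => z.1) hab
      have h2 : a.2 = b.2 := congrArg (fun z : V × Fin 2 => z.2) hab
      exact Prod.ext (Subtype.ext h1) h2
    have hEfinT : ∀ a : ↥S × Fin 2, Efin (embT a) = Sum.inl a := by
      intro a
      simp only [hEfin, heSum, hembT, Equiv.trans_apply, Equiv.prodCongr_apply, Prod.map,
        Equiv.Set.sumCompl_symm_apply_of_mem a.1.2, Equiv.refl_apply,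
        Equiv.sumProdDistrib_apply_left]
    have hEfinR : ∀ a : ↥(Sᶜ) × Fin 2, Efin (embR a) = Sum.inr a := by
      intro a
      have hnm : (↑a.1 : V) ∉ S := a.1.2
      simp only [hEfin, heSum, hembR, Equiv.trans_apply, Equiv.prodCongr_apply, Prod.map,
        Equiv.Set.sumCompl_symm_apply_of_notMem hnm, Equiv.refl_apply,
        Equiv.sumProdDistrib_apply_right]
    have hglueT : ∀ ψT ψR a, glue ψT ψR (embT a) = ψT a := by
      intro ψT ψR a
      show Sum.elim ψT ψR (Efin (embT a)) = ψT a
      rw [hEfinT]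
      rfl
    have hglueR : ∀ ψT ψR a, glue ψT ψR (embR a) = ψR a := by
      intro ψT ψR a
      show Sum.elim ψT ψR (Efin (embR a)) = ψR a
      rw [hEfinR]
      rfl
    have hrangeT : ∀ x : V × Fin 2, p x.1 = i → ∃ a, embT a = x :=
      fun x hx => ⟨⟨⟨x.1, hx⟩, x.2⟩, rfl⟩
    have hrangeR : ∀ x : V × Fin 2, ¬ p x.1 = i → ∃ a, embR a = x :=
      fun x hx => ⟨⟨⟨x.1, hx⟩, x.2⟩, rfl⟩
    have hsum : ∀ FF : (V × Fin 2 → Fin n) → ℝ,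
        (∑ ψ : V × Fin 2 → Fin n, FF ψ) = ∑ ψT : ↥S × Fin 2 → Fin n,
          ∑ ψR : ↥(Sᶜ) × Fin 2 → Fin n, FF (glue ψT ψR) := by
      intro FF
      have e1 : (∑ ψ : V × Fin 2 → Fin n, FF ψ)
          = ∑ q : (↥S × Fin 2 → Fin n) × (↥(Sᶜ) × Fin 2 → Fin n), FF (glue q.1 q.2) :=
        (Fintype.sum_equiv ((Equiv.sumArrowEquivProdArrow _ _ (Fin n)).symm.trans
          (Equiv.arrowCongr Efin.symm (Equiv.refl (Fin n))))
          (fun q => FF (glue q.1 q.2)) FF (fun q => rfl)).symm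
      rw [e1]
      exact (sum_univ_inst _).trans ((Fintype.sum_prod_type
        (f := fun q : (↥S × Fin 2 → Fin n) × (↥(Sᶜ) × Fin 2 → Fin n) => FF (glue q.1 q.2))).trans
        (sum_congr_univ fun ψT => sum_univ_inst _))
    set KT : ↥S → ↥S → Prop := fun a b => H.Adj ↑a ↑b with hKT
    have hKTsym : ∀ a b, KT a b → KT b a := fun a b h => h.symm
    have hKTirr : ∀ a, ¬ KT a a := fun a h => H.loopless.irrefl _ h
    set RIn : Finset ι → (V × Fin 2) → (V × Fin 2) → Prop :=
      fun s' x y => Ks s' x y ∧ (p x.1 = i ∧ p y.1 = i) with hRIn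
    set RCr : Finset ι → (V × Fin 2) → (V × Fin 2) → Prop :=
      fun s' x y => Ks s' x y ∧ ((p x.1 = i ∧ ¬ p y.1 = i) ∨ (¬ p x.1 = i ∧ p y.1 = i)) with hRCr
    set ROut : Finset ι → (V × Fin 2) → (V × Fin 2) → Prop :=
      fun s' x y => Ks s' x y ∧ (¬ p x.1 = i ∧ ¬ p y.1 = i) with hROut
    have hsplit : ∀ (s' : Finset ι) ψ, LP G (Ks s') ψ
        = LP G (RIn s') ψ * (LP G (RCr s') ψ * LP G (ROut s') ψ) := by
      intro s' ψ
      have h0 : LP G (Ks s') ψ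
          = LP G (fun x y => RIn s' x y ∨ (RCr s' x y ∨ ROut s' x y)) ψ :=
        lp_congr G (fun x y => by
          constructor
          · intro h
            by_cases h1 : p x.1 = i <;> by_cases h2 : p y.1 = i
            · exact Or.inl ⟨h, h1, h2⟩
            · exact Or.inr (Or.inl ⟨h, Or.inl ⟨h1, h2⟩⟩)
            · exact Or.inr (Or.inl ⟨h, Or.inr ⟨h1, h2⟩⟩)
            · exact Or.inr (Or.inr ⟨h, h1, h2⟩)
          · rintro (h | h | h) <;> exact h.1) ψ
      rw [h0, lp_split G (A := RIn s') (B := fun x y => RCr s' x y ∨ ROut s' x y)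
        (fun x y h => by
          obtain ⟨⟨-, h1, h2⟩, h'⟩ := h
          rcases h' with ⟨-, ⟨h3, h4⟩ | ⟨h3, h4⟩⟩ | ⟨-, h3, h4⟩
          exacts [h4 h2, h3 h1, h3 h1]) ψ,
        lp_split G (A := RCr s') (B := ROut s')
        (fun x y h => by
          obtain ⟨⟨-, ⟨h1, h2⟩ | ⟨h1, h2⟩⟩, -, h3, h4⟩ := h
          exacts [h3 h1, h4 h2]) ψ]
    have hKsCross : ∀ (s'' : Finset ι) (x y : V × Fin 2), ¬ p x.1 = p y.1 →
        (Ks s'' x y ↔ (H.Adj x.1 y.1 ∧ x.2 = y.2)) := by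
      intro s'' x y hne
      constructor
      · rintro ⟨h1, h2⟩
        exact ⟨h1, not_not.1 fun hne2 => hne (h2.2 hne2).1⟩
      · rintro ⟨h1, h2⟩
        exact ⟨h1, iff_of_false (fun hh => hne hh.1) (not_not.2 h2)⟩
    have hCrEq : ∀ x y, RCr (insert i s) x y ↔ RCr s x y := by
      intro x y
      constructor <;> rintro ⟨hks, hcase⟩ <;>
      · have hne : ¬ p x.1 = p y.1 := by
          rcases hcase with ⟨h1, h2⟩ | ⟨h1, h2⟩
          · exact fun hpp => h2 (hpp.symm.trans h1)
          · exact fun hpp => h1 (hpp.trans h2)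
        exact ⟨(hKsCross _ _ _ hne).2 ((hKsCross _ _ _ hne).1 hks), hcase⟩
    have hOutEq : ∀ x y, ROut (insert i s) x y ↔ ROut s x y := by
      intro x y
      have hmm : ∀ h1 : ¬ p x.1 = i, (p x.1 ∈ insert i s) ↔ p x.1 ∈ s := by
        intro h1
        rw [Finset.mem_insert]
        exact or_iff_right h1
      constructor <;> rintro ⟨⟨hadj, hiff⟩, h1, h2⟩ <;> refine ⟨⟨hadj, ?_⟩, h1, h2⟩
      · exact Iff.trans (and_congr_right fun _ => (hmm h1).symm) hiff
      · exact Iff.trans (and_congr_right fun _ => hmm h1) hiff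
    set Out : (↥(Sᶜ) × Fin 2 → Fin n) → ℝ :=
      fun ψR => LP G (fun a b => ROut s (embR a) (embR b)) ψR with hOutdef
    have hOutnn : ∀ ψR, 0 ≤ Out ψR := fun ψR => lp_nonneg G hnn _ _
    have hOutconv : ∀ ψT ψR, LP G (ROut s) (glue ψT ψR) = Out ψR := by
      intro ψT ψR
      rw [lp_restrict G hnn hsy embR hembRinj
        (fun x y h => ⟨hKsym s _ _ h.1, h.2.2, h.2.1⟩)
        (fun x h => hKirr s _ h.1)
        (fun x y h => ⟨hrangeR x h.2.1, hrangeR y h.2.2⟩) (glue ψT ψR)]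
      have hcomp : (glue ψT ψR) ∘ embR = ψR := funext fun a => hglueR ψT ψR a
      rw [hcomp]
    have hInsym : ∀ s' x y, RIn s' x y → RIn s' y x :=
      fun s' x y h => ⟨hKsym s' _ _ h.1, h.2.2, h.2.1⟩
    have hInirr : ∀ (s' : Finset ι) x, ¬ RIn s' x x := fun s' x h => hKirr s' _ h.1
    have hInrange : ∀ (s' : Finset ι) x y, RIn s' x y →
        (∃ a, embT a = x) ∧ ∃ a, embT a = y :=
      fun s' x y h => ⟨hrangeT x h.2.1, hrangeT y h.2.2⟩
    have hInL : ∀ ψT ψR, LP G (RIn s) (glue ψT ψR)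
        = LP G KT (fun t => ψT (t, 0)) * LP G KT (fun t => ψT (t, 1)) := by
      intro ψT ψR
      rw [lp_restrict G hnn hsy embT hembTinj (hInsym s) (hInirr s) (hInrange s) (glue ψT ψR)]
      have hcomp : (glue ψT ψR) ∘ embT = ψT := funext fun a => hglueT ψT ψR a
      rw [hcomp]
      rw [lp_congr G (B := fun a b : ↥S × Fin 2 => KT a.1 b.1 ∧ a.2 = b.2) (fun a b => ?_) ψT,
        lp_double G hnn hsy hKTsym hKTirr ψT]
      constructor
      · rintro ⟨⟨hadj, hiff⟩, h1, h2⟩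
        refine ⟨hadj, not_not.1 fun hne => ?_⟩
        have hmem := (hiff.2 hne).2
        rw [show p (embT (a.1, a.2)).1 = p (↑a.1 : V) from rfl, hmemT a.1] at hmem
        exact his hmem
      · rintro ⟨hadj, h2⟩
        refine ⟨⟨hadj, iff_of_false (fun hh => his ?_) (not_not.2 h2)⟩, hmemT a.1, hmemT b.1⟩
        have := hh.2
        rwa [show p (embT (a.1, a.2)).1 = p (↑a.1 : V) from rfl, hmemT a.1] at this
    have hInR : ∀ ψT ψR, LP G (RIn (insert i s)) (glue ψT ψR)
        = LP G (tensorK2 (H.induce S)).Adj ψT := by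
      intro ψT ψR
      rw [lp_restrict G hnn hsy embT hembTinj (hInsym _) (hInirr _) (hInrange _) (glue ψT ψR)]
      have hcomp : (glue ψT ψR) ∘ embT = ψT := funext fun a => hglueT ψT ψR a
      rw [hcomp]
      refine lp_congr G (fun a b => ?_) ψT
      have hppe : p (↑a.1 : V) = p (↑b.1 : V) := (hmemT a.1).trans (hmemT b.1).symm
      have hpmem : p (↑a.1 : V) ∈ insert i s := by
        rw [hmemT a.1]
        exact Finset.mem_insert_self i s
      constructor
      · rintro ⟨⟨hadj, hiff⟩, h1, h2⟩
        exact And.intro hadj (hiff.1 ⟨hppe, hpmem⟩)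
      · rintro (⟨hadj, hne⟩ : _ ∧ _)
        exact ⟨⟨hadj, iff_of_true ⟨hppe, hpmem⟩ hne⟩, hmemT a.1, hmemT b.1⟩
    set xx : (↥(Sᶜ) × Fin 2 → Fin n) → Fin 2 → Fin n → ℝ := fun ψR ε ν =>
      ∏ y : ↥(Sᶜ) × Fin 2, cond1 (¬ p ↑y.1 = i ∧ F.Adj i (p ↑y.1) ∧ y.2 = ε) (G ν (ψR y))
      with hxx
    have hxxnn : ∀ ψR ε ν, 0 ≤ xx ψR ε ν :=
      fun _ _ _ => Finset.prod_nonneg fun y _ => cond1_nonneg (hnn _ _)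
    set CrossVal : (↥S × Fin 2 → Fin n) → (↥(Sᶜ) × Fin 2 → Fin n) → ℝ :=
      fun ψT ψR => ∏ x : ↥S × Fin 2, xx ψR x.2 (ψT x) with hCV
    have hCVnn : ∀ ψT ψR, 0 ≤ CrossVal ψT ψR :=
      fun ψT ψR => Finset.prod_nonneg fun x _ => hxxnn ψR x.2 (ψT x)
    have hCrsym : ∀ x y, RCr s x y → RCr s y x := fun x y h =>
      ⟨hKsym s _ _ h.1, h.2.elim (fun hc => Or.inr ⟨hc.2, hc.1⟩) (fun hc => Or.inl ⟨hc.2, hc.1⟩)⟩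
    have hCrirr : ∀ x, ¬ RCr s x x := fun x h => hKirr s _ h.1
    have hCrconv : ∀ ψT ψR, LP G (RCr s) (glue ψT ψR) = CrossVal ψT ψR := by
      intro ψT ψR
      have hof : OP G (fun x y => Ks s x y ∧ (p x.1 = i ∧ ¬ p y.1 = i)) (glue ψT ψR)
          = ∏ x : V × Fin 2, cond1 (p x.1 = i) (xx ψR x.2 (glue ψT ψR x)) := by
        rw [show OP G (fun x y => Ks s x y ∧ (p x.1 = i ∧ ¬ p y.1 = i)) (glue ψT ψR)
            = ∏ x : V × Fin 2, ∏ y : V × Fin 2,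
              cond1 (Ks s x y ∧ (p x.1 = i ∧ ¬ p y.1 = i))
                (G (glue ψT ψR x) (glue ψT ψR y)) from
          Fintype.prod_prod_type (f := fun z : (V × Fin 2) × (V × Fin 2) =>
            cond1 (Ks s z.1 z.2 ∧ (p z.1.1 = i ∧ ¬ p z.2.1 = i))
              (G (glue ψT ψR z.1) (glue ψT ψR z.2)))]
        refine Finset.prod_congr rfl fun x _ => ?_
        by_cases hx : p x.1 = i
        · rw [cond1_pos hx]
          have hinner : ∀ y : V × Fin 2, (Ks s x y ∧ (p x.1 = i ∧ ¬ p y.1 = i))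
              ↔ (¬ p y.1 = i ∧ F.Adj i (p y.1) ∧ y.2 = x.2) := by
            intro y
            constructor
            · rintro ⟨⟨hadj, hiff⟩, -, hyni⟩
              have hne : ¬ p x.1 = p y.1 := fun hpp => hyni (hpp.symm.trans hx)
              refine ⟨hyni, hx ▸ (hpadj _ _ hne).1 hadj, ?_⟩
              exact (not_not.1 fun hne2 => hne (hiff.2 hne2).1).symm
            · rintro ⟨hyni, hF, hy2⟩
              have hne : ¬ p x.1 = p y.1 := fun hpp => hyni (hpp.symm.trans hx)
              refine ⟨⟨(hpadj _ _ hne).2 (by rw [hx]; exact hF),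
                iff_of_false (fun hh => hne hh.1) (not_not.2 hy2.symm)⟩, hx, hyni⟩
          rw [show (∏ y : V × Fin 2, cond1 (Ks s x y ∧ (p x.1 = i ∧ ¬ p y.1 = i))
              (G (glue ψT ψR x) (glue ψT ψR y)))
              = ∏ y : V × Fin 2, cond1 (¬ p y.1 = i ∧ F.Adj i (p y.1) ∧ y.2 = x.2)
                (G (glue ψT ψR x) (glue ψT ψR y)) from
            Finset.prod_congr rfl fun y _ => cond1_congr (hinner y) _]
          rw [prod_guard_restrict embR hembRinj
            (P := fun y : V × Fin 2 => ¬ p y.1 = i ∧ F.Adj i (p y.1) ∧ y.2 = x.2)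
            (fun y hy => hrangeR y hy.1) (fun y => G (glue ψT ψR x) (glue ψT ψR y))]
          refine Finset.prod_congr rfl fun b _ => ?_
          rw [hglueR ψT ψR b]
        · rw [cond1_neg hx]
          exact Finset.prod_eq_one fun y _ => cond1_neg (fun hB => hx hB.2.1) _
      have hof2 : (∏ x : V × Fin 2, cond1 (p x.1 = i) (xx ψR x.2 (glue ψT ψR x)))
          = CrossVal ψT ψR := by
        rw [prod_guard_restrict embT hembTinj
          (P := fun x : V × Fin 2 => p x.1 = i)
          (fun x hx => hrangeT x hx) (fun x => xx ψR x.2 (glue ψT ψR x))]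
        refine Finset.prod_congr rfl fun a _ => ?_
        rw [cond1_pos (hmemT a.1), hglueT ψT ψR a]
      apply sq_cancel (lp_nonneg G hnn _ _) (hCVnn ψT ψR)
      rw [lp_sq G hsy hCrsym hCrirr]
      have hsplitB : OP G (RCr s) (glue ψT ψR)
          = OP G (fun x y => Ks s x y ∧ (p x.1 = i ∧ ¬ p y.1 = i)) (glue ψT ψR)
            * OP G (fun x y => Ks s x y ∧ (¬ p x.1 = i ∧ p y.1 = i)) (glue ψT ψR) := by
        rw [show OP G (RCr s) (glue ψT ψR)
            = OP G (fun x y => (Ks s x y ∧ (p x.1 = i ∧ ¬ p y.1 = i))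
                ∨ (Ks s x y ∧ (¬ p x.1 = i ∧ p y.1 = i))) (glue ψT ψR) from
          op_congr G (fun x y => by
            constructor
            · rintro ⟨hks, ⟨h1, h2⟩ | ⟨h1, h2⟩⟩
              exacts [Or.inl ⟨hks, h1, h2⟩, Or.inr ⟨hks, h1, h2⟩]
            · rintro (⟨hks, h1, h2⟩ | ⟨hks, h1, h2⟩)
              exacts [⟨hks, Or.inl ⟨h1, h2⟩⟩, ⟨hks, Or.inr ⟨h1, h2⟩⟩]) _]
        exact op_split G (fun x y h => h.2.2.1 h.1.2.1) _
      have hswap : OP G (fun x y => Ks s x y ∧ (¬ p x.1 = i ∧ p y.1 = i)) (glue ψT ψR)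
          = OP G (fun x y => Ks s x y ∧ (p x.1 = i ∧ ¬ p y.1 = i)) (glue ψT ψR) :=
        op_swap G hsy (fun x y =>
          ⟨fun h => ⟨hKsym s _ _ h.1, h.2.2, h.2.1⟩,
           fun h => ⟨hKsym s _ _ h.1, h.2.2, h.2.1⟩⟩) _
      rw [hsplitB, hswap, hof, hof2, sq]
    have hCVsplit : ∀ ψT ψR, CrossVal ψT ψR
        = ((∏ t : ↥S, xx ψR 0 (ψT (t, 0))) * ∏ t : ↥S, xx ψR 1 (ψT (t, 1))) := by
      intro ψT ψR
      rw [show CrossVal ψT ψR = ∏ t : ↥S, ∏ ε : Fin 2, xx ψR ε (ψT (t, ε)) from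
        Fintype.prod_prod_type (f := fun x : ↥S × Fin 2 => xx ψR x.2 (ψT x)),
        show (∏ t : ↥S, ∏ ε : Fin 2, xx ψR ε (ψT (t, ε)))
          = ∏ t : ↥S, (xx ψR 0 (ψT (t, 0)) * xx ψR 1 (ψT (t, 1))) from
        Finset.prod_congr rfl fun t _ => Fin.prod_univ_two _,
        Finset.prod_mul_distrib]
    have hindadj : ∀ φ : ↥S → Fin n, LP G (H.induce S).Adj φ = LP G KT φ :=
      fun φ => lp_congr G (fun a b => Iff.rfl) φ
    have hkey : ∀ ψR, (∑ ψT : ↥S × Fin 2 → Fin n,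
          CrossVal ψT ψR * (LP G KT (fun t => ψT (t, 0)) * LP G KT (fun t => ψT (t, 1))))
        ≤ ∑ ψT : ↥S × Fin 2 → Fin n, CrossVal ψT ψR
            * LP G (tensorK2 (H.induce S)).Adj ψT := by
      intro ψR
      have hL : (∑ ψT : ↥S × Fin 2 → Fin n,
            CrossVal ψT ψR * (LP G KT (fun t => ψT (t, 0)) * LP G KT (fun t => ψT (t, 1))))
          = gvol (H.induce S) G hG (fun _ => xx ψR 0)
            * gvol (H.induce S) G hG (fun _ => xx ψR 1) := by
        have h1 : ∀ ψT : ↥S × Fin 2 → Fin n,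
            CrossVal ψT ψR * (LP G KT (fun t => ψT (t, 0)) * LP G KT (fun t => ψT (t, 1)))
            = (fun φ : ↥S → Fin n => (∏ t : ↥S, xx ψR 0 (φ t)) * LP G KT φ)
                (fun t => ψT (t, 0))
              * (fun φ : ↥S → Fin n => (∏ t : ↥S, xx ψR 1 (φ t)) * LP G KT φ)
                (fun t => ψT (t, 1)) := by
          intro ψT
          rw [hCVsplit ψT ψR]
          show _ = ((∏ t : ↥S, xx ψR 0 (ψT (t, 0))) * LP G KT fun t => ψT (t, 0))
            * ((∏ t : ↥S, xx ψR 1 (ψT (t, 1))) * LP G KT fun t => ψT (t, 1))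
          ring
        rw [show (∑ ψT : ↥S × Fin 2 → Fin n,
            CrossVal ψT ψR * (LP G KT (fun t => ψT (t, 0)) * LP G KT (fun t => ψT (t, 1))))
            = ∑ ψT : ↥S × Fin 2 → Fin n,
              (fun φ : ↥S → Fin n => (∏ t : ↥S, xx ψR 0 (φ t)) * LP G KT φ)
                (fun t => ψT (t, 0))
              * (fun φ : ↥S → Fin n => (∏ t : ↥S, xx ψR 1 (φ t)) * LP G KT φ)
                (fun t => ψT (t, 1)) from Finset.sum_congr rfl fun ψT _ => h1 ψT]
        refine Eq.trans ((sum_univ_inst _).trans (sum_double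
          (f := fun φ : ↥S → Fin n => (∏ t : ↥S, xx ψR 0 (φ t)) * LP G KT φ)
          (g := fun φ : ↥S → Fin n => (∏ t : ↥S, xx ψR 1 (φ t)) * LP G KT φ))) ?_
        rw [gvol_eq G hG (H.induce S) (fun _ => xx ψR 0),
          gvol_eq G hG (H.induce S) (fun _ => xx ψR 1)]
        exact congrArg₂ (· * ·)
          (sum_congr_univ fun φ => by rw [hindadj φ]; exact mul_comm _ _)
          (sum_congr_univ fun φ => by rw [hindadj φ]; exact mul_comm _ _)
      have hR : (∑ ψT : ↥S × Fin 2 → Fin n,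
            CrossVal ψT ψR * LP G (tensorK2 (H.induce S)).Adj ψT)
          = gvol (tensorK2 (H.induce S)) G hG
              (fun q => if q.2 = 0 then xx ψR 0 else xx ψR 1) := by
        rw [gvol_eq G hG (tensorK2 (H.induce S))
          (fun q => if q.2 = 0 then xx ψR 0 else xx ψR 1)]
        refine sum_congr_univ fun ψT => ?_
        have hprod : (∏ q : ↥S × Fin 2,
            (if q.2 = 0 then xx ψR 0 else xx ψR 1) (ψT q)) = CrossVal ψT ψR := by
          refine Finset.prod_congr rfl fun q _ => ?_
          rcases q with ⟨t, ε⟩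
          fin_cases ε <;> simp
        exact (mul_comm _ _).trans
          (congrArg (fun r => LP G (tensorK2 (H.induce S)).Adj ψT * r) hprod.symm)
      rw [hL, hR]
      exact hpcbs i _ (xx ψR 0) (xx ψR 1) (hxxnn ψR 0) (hxxnn ψR 1)
    calc Wt s = ∑ ψT : ↥S × Fin 2 → Fin n, ∑ ψR : ↥(Sᶜ) × Fin 2 → Fin n,
          LP G (Ks s) (glue ψT ψR) := hsum _
      _ = ∑ ψR : ↥(Sᶜ) × Fin 2 → Fin n, ∑ ψT : ↥S × Fin 2 → Fin n,
          LP G (Ks s) (glue ψT ψR) := Finset.sum_comm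
      _ = ∑ ψR : ↥(Sᶜ) × Fin 2 → Fin n, Out ψR * ∑ ψT : ↥S × Fin 2 → Fin n,
          CrossVal ψT ψR * (LP G KT (fun t => ψT (t, 0)) * LP G KT (fun t => ψT (t, 1))) := by
            refine Finset.sum_congr rfl fun ψR _ => ?_
            rw [Finset.mul_sum]
            refine Finset.sum_congr rfl fun ψT _ => ?_
            rw [hsplit s (glue ψT ψR), hInL ψT ψR, hCrconv ψT ψR, hOutconv ψT ψR]
            ring
      _ ≤ ∑ ψR : ↥(Sᶜ) × Fin 2 → Fin n, Out ψR * ∑ ψT : ↥S × Fin 2 → Fin n,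
          CrossVal ψT ψR * LP G (tensorK2 (H.induce S)).Adj ψT :=
            Finset.sum_le_sum fun ψR _ =>
              mul_le_mul_of_nonneg_left (hkey ψR) (hOutnn ψR)
      _ = ∑ ψR : ↥(Sᶜ) × Fin 2 → Fin n, ∑ ψT : ↥S × Fin 2 → Fin n,
          LP G (Ks (insert i s)) (glue ψT ψR) := by
            refine Finset.sum_congr rfl fun ψR _ => ?_
            rw [Finset.mul_sum]
            refine Finset.sum_congr rfl fun ψT _ => ?_
            rw [hsplit (insert i s) (glue ψT ψR), hInR ψT ψR,
              lp_congr G hCrEq (glue ψT ψR), lp_congr G hOutEq (glue ψT ψR),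
              hCrconv ψT ψR, hOutconv ψT ψR]
            ring
      _ = ∑ ψT : ↥S × Fin 2 → Fin n, ∑ ψR : ↥(Sᶜ) × Fin 2 → Fin n,
          LP G (Ks (insert i s)) (glue ψT ψR) := Finset.sum_comm
      _ = Wt (insert i s) := (hsum _).symm
  have hall : ∀ s : Finset ι, Wt ∅ ≤ Wt s := by
    intro s
    induction s using Finset.induction_on with
    | empty => exact le_rfl
    | @insert a s ha ih => exact le_trans ih (hmono s a ha)
  rw [hWempty, ← hWuniv]
  exact hall Finset.univ
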